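/- Let G be a bipartite graph with bipartition (X,Y) and let G' be obtained from G by adding vertices u₁, u₂ and, for each x ∈ X a new vertex x', for each y ∈ Y a new vertex y', with edges u₁u₂, {x u₂, u₂ x' : x ∈ X}, {y u₁, u₁ y' : y ∈ Y}. If D is a dominating set of G with |D| ≤ k, then D ∪ {x' : x ∈ X} ∪ {y' : y ∈ Y} is a strong geodetic set of G' of size at most k + |V(G)|. -/

import Mathlib

/-- A selection of fixed geodesics between pairs of vertices of `S`:
each element of `P` is a walk whose endpoints lie in `S`, which is a shortest path,
with at most one walk per ordered pair of endpoints, and with the walks chosen for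
the two orderings of a pair being reverses of each other. -/
def IsGeodesicSelection {V : Type*} (G : SimpleGraph V) (S : Set V)
    (P : Set ((u : V) × (v : V) × G.Walk u v)) : Prop :=
  (∀ q ∈ P, q.1 ∈ S ∧ q.2.1 ∈ S ∧ q.2.2.IsPath ∧ q.2.2.length = G.dist q.1 q.2.1) ∧
  (∀ q ∈ P, ∀ q' ∈ P,
    (q.1 = q'.1 ∧ q.2.1 = q'.2.1 → q = q') ∧
    (q.1 = q'.2.1 ∧ q.2.1 = q'.1 → q.2.2.support = q'.2.2.support.reverse))

/-- `S` is a strong geodetic set of `G` if one can fix one shortest path between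
each pair of vertices of `S` so that all vertices of `G` are covered. -/
def IsStrongGeodeticSet {V : Type*} (G : SimpleGraph V) (S : Set V) : Prop :=
  ∃ P, IsGeodesicSelection G S P ∧ ∀ w : V, ∃ q ∈ P, w ∈ q.2.2.support

/-- The strong geodetic number: minimum size of a strong geodetic set. -/
noncomputable def strongGeodeticNumber {V : Type*} (G : SimpleGraph V) : ℕ :=
  sInf {k | ∃ S : Set V, S.ncard = k ∧ IsStrongGeodeticSet G S}

/-- The vertex `u₁` in the construction `G'`. -/
def uOne {V : Type*} : V ⊕ V ⊕ Bool := Sum.inr (Sum.inr false)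

/-- The vertex `u₂` in the construction `G'`. -/
def uTwo {V : Type*} : V ⊕ V ⊕ Bool := Sum.inr (Sum.inr true)

/-- The copy `v'` of a vertex `v` in the construction `G'`. -/
def copyOf {V : Type*} (v : V) : V ⊕ V ⊕ Bool := Sum.inr (Sum.inl v)

/-- The relation generating the graph `G'` obtained from a bipartite `G` with parts `X, Y`
by adding `u₁, u₂` and copies `x'` (`x ∈ X`), `y'` (`y ∈ Y`), with edges `u₁u₂`,
`x u₂`, `u₂ x'` for `x ∈ X`, and `y u₁`, `u₁ y'` for `y ∈ Y`. -/
def gPrimeRel {V : Type*} (G : SimpleGraph V) (X Y : Set V) :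
    (V ⊕ V ⊕ Bool) → (V ⊕ V ⊕ Bool) → Prop := fun a b =>
  match a, b with
  | Sum.inl u, Sum.inl v => G.Adj u v
  | Sum.inr (Sum.inr false), Sum.inr (Sum.inr true) => True
  | Sum.inl v, Sum.inr (Sum.inr true) => v ∈ X
  | Sum.inl v, Sum.inr (Sum.inr false) => v ∈ Y
  | Sum.inr (Sum.inr true), Sum.inr (Sum.inl v) => v ∈ X
  | Sum.inr (Sum.inr false), Sum.inr (Sum.inl v) => v ∈ Y
  | _, _ => False

/-- The graph `G'` of the reduction. -/
def gPrime {V : Type*} (G : SimpleGraph V) (X Y : Set V) : SimpleGraph (V ⊕ V ⊕ Bool) :=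
  SimpleGraph.fromRel (gPrimeRel G X Y)

section Aux
variable {V : Type*} {G : SimpleGraph V} {X Y : Set V}

lemma gPrime_adj_iff {a b : V ⊕ V ⊕ Bool} :
    (gPrime G X Y).Adj a b ↔ a ≠ b ∧ (gPrimeRel G X Y a b ∨ gPrimeRel G X Y b a) :=
  SimpleGraph.fromRel_adj _ a b

lemma not_adj_inl_copy {u v : V} : ¬ (gPrime G X Y).Adj (Sum.inl u) (copyOf v) := by
  rw [gPrime_adj_iff]
  rintro ⟨-, h | h⟩ <;> exact h

lemma adj_copy_cases {a : V ⊕ V ⊕ Bool} {v : V} (h : (gPrime G X Y).Adj a (copyOf v)) :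
    (v ∈ X ∧ a = uTwo) ∨ (v ∈ Y ∧ a = uOne) := by
  rw [gPrime_adj_iff] at h
  obtain ⟨hne, h | h⟩ := h
  · rcases a with u | u | b
    · exact h.elim
    · exact h.elim
    · cases b
      · exact Or.inr ⟨h, rfl⟩
      · exact Or.inl ⟨h, rfl⟩
  · rcases a with u | u | b
    · exact h.elim
    · exact h.elim
    · cases b <;> exact h.elim

lemma adj_inl_uTwo_iff {v : V} : (gPrime G X Y).Adj (Sum.inl v) uTwo ↔ v ∈ X := by
  rw [gPrime_adj_iff]
  constructor
  · rintro ⟨-, h | h⟩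
    · exact h
    · exact h.elim
  · exact fun h => ⟨by simp [uTwo], Or.inl h⟩

lemma adj_inl_uOne_iff {v : V} : (gPrime G X Y).Adj (Sum.inl v) uOne ↔ v ∈ Y := by
  rw [gPrime_adj_iff]
  constructor
  · rintro ⟨-, h | h⟩
    · exact h
    · exact h.elim
  · exact fun h => ⟨by simp [uOne], Or.inl h⟩

lemma adj_uTwo_copy {v : V} (h : v ∈ X) : (gPrime G X Y).Adj uTwo (copyOf v) :=
  gPrime_adj_iff.mpr ⟨by simp [uTwo, copyOf], Or.inl h⟩

lemma adj_uOne_copy {v : V} (h : v ∈ Y) : (gPrime G X Y).Adj uOne (copyOf v) :=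
  gPrime_adj_iff.mpr ⟨by simp [uOne, copyOf], Or.inl h⟩

lemma adj_inl_inl {u v : V} (h : G.Adj u v) : (gPrime G X Y).Adj (Sum.inl u) (Sum.inl v) :=
  gPrime_adj_iff.mpr ⟨by simpa using h.ne, Or.inl h⟩

lemma dist_eq_two_of {W : Type*} {G' : SimpleGraph W} {a b : W} (p : G'.Walk a b)
    (hl : p.length = 2) (hne : a ≠ b) (hadj : ¬ G'.Adj a b) : G'.dist a b = 2 := by
  have hle : G'.dist a b ≤ 2 := hl ▸ SimpleGraph.dist_le p
  have hr : G'.Reachable a b := ⟨p⟩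
  have h0 : G'.dist a b ≠ 0 := by simp [hne, hr]
  have h1 : G'.dist a b ≠ 1 := fun h => hadj (SimpleGraph.dist_eq_one_iff_adj.mp h)
  omega

lemma dist_eq_three_of {W : Type*} {G' : SimpleGraph W} {a b : W} (p : G'.Walk a b)
    (hl : p.length = 3) (hne : a ≠ b) (hadj : ¬ G'.Adj a b)
    (hmid : ∀ w, G'.Adj a w → ¬ G'.Adj w b) : G'.dist a b = 3 := by
  have hle : G'.dist a b ≤ 3 := hl ▸ SimpleGraph.dist_le p
  have hr : G'.Reachable a b := ⟨p⟩
  have h0 : G'.dist a b ≠ 0 := by simp [hne, hr]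
  have h1 : G'.dist a b ≠ 1 := fun h => hadj (SimpleGraph.dist_eq_one_iff_adj.mp h)
  have h2 : G'.dist a b ≠ 2 := by
    intro h
    obtain ⟨q, hq⟩ := hr.exists_walk_length_eq_dist
    rw [h] at hq
    cases q with
    | nil => simp at hq
    | cons h' q' =>
      cases q' with
      | nil => simp at hq
      | cons h'' q'' =>
        have hz : q''.length = 0 := by simp only [SimpleGraph.Walk.length_cons] at hq; omega
        have hb := SimpleGraph.Walk.eq_of_length_eq_zero hz
        exact hmid _ h' (hb ▸ h'')
  omega

end Aux

/-- If `D` is a dominating set of bipartite `G` with `|D| ≤ k`, then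
`D ∪ {x' : x ∈ X} ∪ {y' : y ∈ Y}` is a strong geodetic set of `G'` of size at most
`k + |V(G)|`. -/
theorem dominating_gives_strong_geodetic {V : Type*} [Fintype V]
    (G : SimpleGraph V) (X Y : Set V) (hX : X.Nonempty) (hY : Y.Nonempty)
    (hunion : X ∪ Y = Set.univ) (hdisj : X ∩ Y = ∅)
    (hbip : ∀ u v, G.Adj u v → (u ∈ X ∧ v ∈ Y) ∨ (u ∈ Y ∧ v ∈ X))
    (D : Set V) (k : ℕ)
    (hdom : ∀ v, v ∉ D → ∃ u ∈ D, G.Adj u v) (hD : D.ncard ≤ k) :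
    IsStrongGeodeticSet (gPrime G X Y) (Sum.inl '' D ∪ copyOf '' X ∪ copyOf '' Y) ∧
      (Sum.inl '' D ∪ copyOf '' X ∪ copyOf '' Y).ncard ≤ k + Nat.card V := by
  classical
  have hdisj' : ∀ a, a ∈ X → a ∈ Y → False := fun a ha hb =>
    Set.eq_empty_iff_forall_notMem.mp hdisj a ⟨ha, hb⟩
  have hXY : ∀ v : V, v ∈ X ∨ v ∈ Y := fun v => by
    have h := Set.mem_univ v
    rw [← hunion] at h
    exact h
  have hcopy_inj : Function.Injective (copyOf (V := V)) := fun a b h => by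
    simpa [copyOf] using h
  set S := Sum.inl '' D ∪ copyOf '' X ∪ copyOf '' Y with hS
  have hSl : ∀ d ∈ D, Sum.inl d ∈ S := fun d hd => Or.inl (Or.inl ⟨d, hd, rfl⟩)
  have hSc : ∀ v : V, copyOf v ∈ S := fun v => by
    rcases hXY v with h | h
    · exact Or.inl (Or.inr ⟨v, h, rfl⟩)
    · exact Or.inr ⟨v, h, rfl⟩
  constructor
  · -- the strong geodetic part
    have hbuild : ∀ v : V,
        ∃ q : ((u : V ⊕ V ⊕ Bool) × (w : V ⊕ V ⊕ Bool) × (gPrime G X Y).Walk u w),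
          (∃ d ∈ D, q.1 = Sum.inl d) ∧ q.2.1 = copyOf v ∧
          q.2.2.length = (gPrime G X Y).dist q.1 q.2.1 ∧
          Sum.inl v ∈ q.2.2.support ∧ (v ∈ X → uTwo ∈ q.2.2.support) ∧
          (v ∈ Y → uOne ∈ q.2.2.support) := by
      intro v
      rcases hXY v with hvX | hvY
      · by_cases hvD : v ∈ D
        · have h1 : (gPrime G X Y).Adj (Sum.inl v) uTwo := adj_inl_uTwo_iff.mpr hvX
          have h2 : (gPrime G X Y).Adj uTwo (copyOf v) := adj_uTwo_copy hvX
          refine ⟨⟨Sum.inl v, copyOf v,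
            SimpleGraph.Walk.cons h1 (SimpleGraph.Walk.cons h2 SimpleGraph.Walk.nil)⟩,
            ⟨v, hvD, rfl⟩, rfl, ?_, ?_, fun _ => ?_, fun h => (hdisj' v hvX h).elim⟩
          · rw [dist_eq_two_of
              (SimpleGraph.Walk.cons h1 (SimpleGraph.Walk.cons h2 SimpleGraph.Walk.nil))
              rfl (by simp [copyOf]) not_adj_inl_copy]
            rfl
          · simp
          · simp
        · obtain ⟨d, hdD, hadj⟩ := hdom v hvD
          have hdY : d ∈ Y := by
            rcases hbip d v hadj with ⟨h1', h2'⟩ | ⟨h1', h2'⟩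
            · exact (hdisj' v hvX h2').elim
            · exact h1'
          have h0 : (gPrime G X Y).Adj (Sum.inl d) (Sum.inl v) := adj_inl_inl hadj
          have h1 : (gPrime G X Y).Adj (Sum.inl v) uTwo := adj_inl_uTwo_iff.mpr hvX
          have h2 : (gPrime G X Y).Adj uTwo (copyOf v) := adj_uTwo_copy hvX
          refine ⟨⟨Sum.inl d, copyOf v,
            SimpleGraph.Walk.cons h0 (SimpleGraph.Walk.cons h1
              (SimpleGraph.Walk.cons h2 SimpleGraph.Walk.nil))⟩,
            ⟨d, hdD, rfl⟩, rfl, ?_, ?_, fun _ => ?_, fun h => (hdisj' v hvX h).elim⟩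
          · have hmid : ∀ w, (gPrime G X Y).Adj (Sum.inl d) w →
                ¬ (gPrime G X Y).Adj w (copyOf v) := by
              intro w hw hwc
              rcases adj_copy_cases hwc with ⟨hvX', rfl⟩ | ⟨hvY', rfl⟩
              · exact hdisj' d (adj_inl_uTwo_iff.mp hw) hdY
              · exact hdisj' v hvX hvY'
            rw [dist_eq_three_of
              (SimpleGraph.Walk.cons h0 (SimpleGraph.Walk.cons h1
                (SimpleGraph.Walk.cons h2 SimpleGraph.Walk.nil)))
              rfl (by simp [copyOf]) not_adj_inl_copy hmid]
            rfl
          · simp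
          · simp
      · by_cases hvD : v ∈ D
        · have h1 : (gPrime G X Y).Adj (Sum.inl v) uOne := adj_inl_uOne_iff.mpr hvY
          have h2 : (gPrime G X Y).Adj uOne (copyOf v) := adj_uOne_copy hvY
          refine ⟨⟨Sum.inl v, copyOf v,
            SimpleGraph.Walk.cons h1 (SimpleGraph.Walk.cons h2 SimpleGraph.Walk.nil)⟩,
            ⟨v, hvD, rfl⟩, rfl, ?_, ?_, fun h => (hdisj' v h hvY).elim, fun _ => ?_⟩
          · rw [dist_eq_two_of
              (SimpleGraph.Walk.cons h1 (SimpleGraph.Walk.cons h2 SimpleGraph.Walk.nil))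
              rfl (by simp [copyOf]) not_adj_inl_copy]
            rfl
          · simp
          · simp
        · obtain ⟨d, hdD, hadj⟩ := hdom v hvD
          have hdX : d ∈ X := by
            rcases hbip d v hadj with ⟨h1', h2'⟩ | ⟨h1', h2'⟩
            · exact h1'
            · exact (hdisj' v h2' hvY).elim
          have h0 : (gPrime G X Y).Adj (Sum.inl d) (Sum.inl v) := adj_inl_inl hadj
          have h1 : (gPrime G X Y).Adj (Sum.inl v) uOne := adj_inl_uOne_iff.mpr hvY
          have h2 : (gPrime G X Y).Adj uOne (copyOf v) := adj_uOne_copy hvY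
          refine ⟨⟨Sum.inl d, copyOf v,
            SimpleGraph.Walk.cons h0 (SimpleGraph.Walk.cons h1
              (SimpleGraph.Walk.cons h2 SimpleGraph.Walk.nil))⟩,
            ⟨d, hdD, rfl⟩, rfl, ?_, ?_, fun h => (hdisj' v h hvY).elim, fun _ => ?_⟩
          · have hmid : ∀ w, (gPrime G X Y).Adj (Sum.inl d) w →
                ¬ (gPrime G X Y).Adj w (copyOf v) := by
              intro w hw hwc
              rcases adj_copy_cases hwc with ⟨hvX', rfl⟩ | ⟨hvY', rfl⟩
              · exact hdisj' v hvX' hvY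
              · exact hdisj' d hdX (adj_inl_uOne_iff.mp hw)
            rw [dist_eq_three_of
              (SimpleGraph.Walk.cons h0 (SimpleGraph.Walk.cons h1
                (SimpleGraph.Walk.cons h2 SimpleGraph.Walk.nil)))
              rfl (by simp [copyOf]) not_adj_inl_copy hmid]
            rfl
          · simp
          · simp
    choose Q hQ1 hQ2 hQ3 hQ4 hQ5 hQ6 using hbuild
    refine ⟨{q | ∃ v : V, q = Q v ∨ q = ⟨(Q v).2.1, (Q v).1, (Q v).2.2.reverse⟩}, ⟨?_, ?_⟩, ?_⟩
    · rintro q ⟨v, rfl | rfl⟩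
      · obtain ⟨d, hd, hd'⟩ := hQ1 v
        refine ⟨hd' ▸ hSl d hd, (hQ2 v) ▸ hSc v, ?_, hQ3 v⟩
        exact SimpleGraph.Walk.isPath_of_length_eq_dist _ (hQ3 v)
      · obtain ⟨d, hd, hd'⟩ := hQ1 v
        refine ⟨(hQ2 v) ▸ hSc v, hd' ▸ hSl d hd, ?_, ?_⟩
        · exact (SimpleGraph.Walk.isPath_of_length_eq_dist _ (hQ3 v)).reverse
        · simp only [SimpleGraph.Walk.length_reverse, hQ3 v]
          exact SimpleGraph.dist_comm
    · rintro q ⟨v, rfl | rfl⟩ q' ⟨w, rfl | rfl⟩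
      · constructor
        · rintro ⟨-, h2⟩
          have : v = w := hcopy_inj ((hQ2 v).symm.trans (h2.trans (hQ2 w)))
          rw [this]
        · rintro ⟨h1, -⟩
          obtain ⟨d, -, hd'⟩ := hQ1 v
          rw [hd', hQ2 w] at h1
          simp [copyOf] at h1
      · constructor
        · rintro ⟨h1, -⟩
          obtain ⟨d, -, hd'⟩ := hQ1 v
          rw [hd', hQ2 w] at h1
          simp [copyOf] at h1
        · rintro ⟨-, h2⟩
          have : v = w := hcopy_inj ((hQ2 v).symm.trans (h2.trans (hQ2 w)))
          subst this
          simp [SimpleGraph.Walk.support_reverse]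
      · constructor
        · rintro ⟨h1, -⟩
          obtain ⟨d, -, hd'⟩ := hQ1 w
          rw [hd', hQ2 v] at h1
          simp [copyOf] at h1
        · rintro ⟨h1, -⟩
          have : v = w := hcopy_inj ((hQ2 v).symm.trans (h1.trans (hQ2 w)))
          subst this
          simp [SimpleGraph.Walk.support_reverse]
      · constructor
        · rintro ⟨h1, -⟩
          have : v = w := hcopy_inj ((hQ2 v).symm.trans (h1.trans (hQ2 w)))
          rw [this]
        · rintro ⟨-, h2⟩
          obtain ⟨d, -, hd'⟩ := hQ1 v
          rw [hd', hQ2 w] at h2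
          simp [copyOf] at h2
    · rintro (v | v | b)
      · exact ⟨Q v, ⟨v, Or.inl rfl⟩, hQ4 v⟩
      · refine ⟨Q v, ⟨v, Or.inl rfl⟩, ?_⟩
        have h := (Q v).2.2.end_mem_support
        show copyOf v ∈ (Q v).2.2.support
        rw [← hQ2 v]
        exact h
      · cases b
        · obtain ⟨y0, hy0⟩ := hY
          exact ⟨Q y0, ⟨y0, Or.inl rfl⟩, hQ6 y0 hy0⟩
        · obtain ⟨x0, hx0⟩ := hX
          exact ⟨Q x0, ⟨x0, Or.inl rfl⟩, hQ5 x0 hx0⟩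
  · calc S.ncard ≤ (Sum.inl '' D).ncard + (copyOf '' X ∪ copyOf '' Y).ncard := by
          rw [hS, Set.union_assoc]
          exact Set.ncard_union_le _ _
      _ ≤ k + Nat.card V := by
          have h1 : ((Sum.inl '' D : Set (V ⊕ V ⊕ Bool))).ncard = D.ncard :=
            Set.ncard_image_of_injective _ Sum.inl_injective
          have h2 : copyOf '' X ∪ copyOf '' Y = copyOf '' (Set.univ : Set V) := by
            rw [← Set.image_union, hunion]
          rw [h1, h2, Set.ncard_image_of_injective _ hcopy_inj, Set.ncard_univ]
          omega
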